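/- The Bell numbers satisfy the upper bound B_q ≤ (q / ln(q+1))^q for all q ≥ 1. -/

import Mathlib

open MeasureTheory Finset
open Nat

/-- Stirling numbers of the second kind. -/
def stirling2 : ℕ → ℕ → ℕ
  | 0, 0 => 1
  | 0, _ + 1 => 0
  | _ + 1, 0 => 0
  | n + 1, k + 1 => (k + 1) * stirling2 n (k + 1) + stirling2 n k

/-- Bell numbers. -/
def bell (q : ℕ) : ℕ := ∑ j ∈ Finset.range (q + 1), stirling2 q j

lemma stirling2_identity (n k : ℕ) :
    ∑ j ∈ Finset.range (k + 1), k.choose j * j ! * stirling2 n j = k ^ n := by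
  induction n generalizing k with
  | zero =>
    rw [Finset.sum_range_succ']
    simp [stirling2]
  | succ n ih =>
    rw [Finset.sum_range_succ']
    have h0 : stirling2 (n + 1) 0 = 0 := rfl
    simp only [h0, mul_zero, add_zero]
    have hexp : ∀ i, k.choose (i + 1) * (i + 1)! * stirling2 (n + 1) (i + 1)
        = k.choose (i + 1) * (i + 1)! * (i + 1) * stirling2 n (i + 1)
          + k.choose (i + 1) * (i + 1) * i ! * stirling2 n i := by
      intro i
      show k.choose (i + 1) * (i + 1)! * ((i + 1) * stirling2 n (i + 1) + stirling2 n i) = _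
      rw [Nat.factorial_succ]
      ring
    rw [Finset.sum_congr rfl fun i _ => hexp i, Finset.sum_add_distrib]
    have hA : ∑ i ∈ Finset.range k, k.choose (i + 1) * (i + 1)! * (i + 1) * stirling2 n (i + 1)
        = ∑ j ∈ Finset.range (k + 1), k.choose j * j ! * j * stirling2 n j := by
      rw [Finset.sum_range_succ']
      simp
    have hB : ∑ i ∈ Finset.range k, k.choose (i + 1) * (i + 1) * i ! * stirling2 n i
        = ∑ j ∈ Finset.range (k + 1), k.choose j * (k - j) * j ! * stirling2 n j := by
      rw [Finset.sum_range_succ]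
      simp only [Nat.sub_self, mul_zero, zero_mul, add_zero]
      exact Finset.sum_congr rfl fun i _ => by rw [Nat.choose_succ_right_eq]
    rw [hA, hB, ← Finset.sum_add_distrib]
    have : ∀ j ∈ Finset.range (k + 1),
        k.choose j * j ! * j * stirling2 n j + k.choose j * (k - j) * j ! * stirling2 n j
        = k * (k.choose j * j ! * stirling2 n j) := by
      intro j hj
      have hjk : j ≤ k := Nat.lt_succ_iff.mp (Finset.mem_range.mp hj)
      have hk : j + (k - j) = k := Nat.add_sub_cancel' hjk
      calc k.choose j * j ! * j * stirling2 n j + k.choose j * (k - j) * j ! * stirling2 n j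
          = (j + (k - j)) * (k.choose j * j ! * stirling2 n j) := by ring
        _ = k * (k.choose j * j ! * stirling2 n j) := by rw [hk]
    rw [Finset.sum_congr rfl this, ← Finset.mul_sum, ih, pow_succ]
    ring

lemma factorial_mul_stirling2_le (n k : ℕ) : k ! * stirling2 n k ≤ k ^ n := by
  calc k ! * stirling2 n k = k.choose k * k ! * stirling2 n k := by simp
    _ ≤ ∑ j ∈ Finset.range (k + 1), k.choose j * j ! * stirling2 n j :=
        Finset.single_le_sum (f := fun j => k.choose j * j ! * stirling2 n j)
          (fun i _ => Nat.zero_le _) (Finset.self_mem_range_succ k)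
    _ = k ^ n := stirling2_identity n k

lemma stirling2_le_real (n k : ℕ) : (stirling2 n k : ℝ) ≤ (k : ℝ) ^ n / (k ! : ℝ) := by
  rw [le_div_iff₀ (by positivity : (0:ℝ) < (k ! : ℝ))]
  have := factorial_mul_stirling2_le n k
  have h : ((k ! * stirling2 n k : ℕ) : ℝ) ≤ ((k ^ n : ℕ) : ℝ) := Nat.cast_le.mpr this
  push_cast at h
  linarith

lemma pow_le_aux (q k : ℕ) (t : ℝ) (ht : 0 < t) (hq : 1 ≤ q) :
    (k : ℝ) ^ q ≤ ((q : ℝ) / (Real.exp 1 * t)) ^ q * Real.exp (t * k) := by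
  have hq0 : (0:ℝ) < q := by exact_mod_cast hq
  have hk0 : (0:ℝ) ≤ k := Nat.cast_nonneg k
  have hbase : (k : ℝ) ≤ (q : ℝ) / (Real.exp 1 * t) * Real.exp (t * k / q) := by
    have h1 : t * k / q ≤ Real.exp (t * k / q - 1) := by
      have := Real.add_one_le_exp (t * k / q - 1)
      linarith
    rw [Real.exp_sub] at h1
    have he : (0:ℝ) < Real.exp 1 := Real.exp_pos 1
    rw [div_mul_eq_mul_div, le_div_iff₀ (by positivity)]
    rw [div_le_div_iff₀ (by positivity) he] at h1
    nlinarith [h1]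
  calc (k : ℝ) ^ q ≤ ((q : ℝ) / (Real.exp 1 * t) * Real.exp (t * k / q)) ^ q :=
        pow_le_pow_left₀ hk0 hbase q
    _ = ((q : ℝ) / (Real.exp 1 * t)) ^ q * Real.exp (t * k) := by
        rw [mul_pow, ← Real.exp_nat_mul]
        congr 2
        field_simp

lemma bell_le_sum (q : ℕ) : (bell q : ℝ) ≤ ∑ k ∈ Finset.range (q+1), (k:ℝ)^q / (k ! : ℝ) := by
  rw [bell]
  push_cast
  exact Finset.sum_le_sum fun k _ => stirling2_le_real q k

lemma main_bound (q : ℕ) (t : ℝ) (ht : 0 < t) (hq : 1 ≤ q) :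
    (bell q : ℝ) ≤ ((q:ℝ)/(Real.exp 1 * t))^q * Real.exp (Real.exp t) := by
  calc (bell q : ℝ) ≤ ∑ k ∈ Finset.range (q+1), (k:ℝ)^q / (k ! : ℝ) := bell_le_sum q
    _ ≤ ∑ k ∈ Finset.range (q+1), ((q:ℝ)/(Real.exp 1 * t))^q * Real.exp (t*k) / (k ! : ℝ) := by
        gcongr with k hk
        exact pow_le_aux q k t ht hq
    _ = ((q:ℝ)/(Real.exp 1 * t))^q
        * ∑ k ∈ Finset.range (q+1), (Real.exp t)^k / (k ! : ℝ) := by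
        rw [Finset.mul_sum]
        refine Finset.sum_congr rfl fun k _ => ?_
        rw [mul_comm t (k:ℝ), Real.exp_nat_mul, mul_div_assoc]
    _ ≤ ((q:ℝ)/(Real.exp 1 * t))^q * Real.exp (Real.exp t) := by
        gcongr
        exact Real.sum_le_exp_of_nonneg (Real.exp_pos t).le _

lemma small_case (q : ℕ) (c : ℝ) (hq : 1 ≤ q) (hc : 0 < c)
    (hlog : Real.log ((q:ℝ) + 1) ≤ c) (h : (bell q : ℝ) ≤ ((q:ℝ)/c)^q) :
    (bell q : ℝ) ≤ ((q : ℝ) / Real.log ((q:ℝ) + 1)) ^ q := by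
  have hq1 : (1:ℝ) ≤ (q:ℝ) := by exact_mod_cast hq
  have hL : 0 < Real.log ((q:ℝ)+1) := Real.log_pos (by linarith)
  refine h.trans (pow_le_pow_left₀ (by positivity) ?_ q)
  exact div_le_div_of_nonneg_left (Nat.cast_nonneg q) hL hlog

set_option maxHeartbeats 1600000 in
theorem stmt_10 (q : ℕ) (hq : 1 ≤ q) :
    (bell q : ℝ) ≤ ((q : ℝ) / Real.log (q + 1)) ^ q := by
  have l2 : Real.log 2 ≤ 0.6931471808 := Real.log_two_lt_d9.le
  have l32 : Real.log (3/2) ≤ 1/2 := by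
    have := Real.log_le_sub_one_of_pos (show (0:ℝ) < 3/2 by norm_num); linarith
  have l54 : Real.log (5/4) ≤ 1/4 := by
    have := Real.log_le_sub_one_of_pos (show (0:ℝ) < 5/4 by norm_num); linarith
  have l74 : Real.log (7/4) ≤ 3/4 := by
    have := Real.log_le_sub_one_of_pos (show (0:ℝ) < 7/4 by norm_num); linarith
  have l3 : Real.log 3 ≤ 1.1931471808 := by
    rw [show (3:ℝ) = 2 * (3/2) by norm_num, Real.log_mul two_ne_zero (by norm_num)]
    linarith
  have l4 : Real.log 4 ≤ 1.3862943616 := by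
    rw [show (4:ℝ) = 2^2 by norm_num, Real.log_pow]
    push_cast; linarith
  have l5 : Real.log 5 ≤ 1.6362943616 := by
    rw [show (5:ℝ) = 4 * (5/4) by norm_num, Real.log_mul (by norm_num) (by norm_num)]
    linarith
  have l6 : Real.log 6 ≤ 1.8862943616 := by
    rw [show (6:ℝ) = 2 * 3 by norm_num, Real.log_mul (by norm_num) (by norm_num)]
    linarith
  have l7 : Real.log 7 ≤ 2.1362943616 := by
    rw [show (7:ℝ) = 4 * (7/4) by norm_num, Real.log_mul (by norm_num) (by norm_num)]
    linarith
  have l8 : Real.log 8 ≤ 2.0794415424 := by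
    rw [show (8:ℝ) = 2^3 by norm_num, Real.log_pow]
    push_cast; linarith
  rcases lt_or_ge q 8 with h8 | h8
  · interval_cases q
    · refine small_case 1 0.6931471808 (by norm_num) (by norm_num) (by push_cast; norm_num; linarith [l2]) ?_
      have hb : bell 1 = 1 := by decide
      rw [hb]; norm_num
    · refine small_case 2 1.1931471808 (by norm_num) (by norm_num) (by push_cast; norm_num; linarith [l3]) ?_
      have hb : bell 2 = 2 := by decide
      rw [hb]; norm_num
    · refine small_case 3 1.3862943616 (by norm_num) (by norm_num) (by push_cast; norm_num; linarith [l4]) ?_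
      have hb : bell 3 = 5 := by decide
      rw [hb]; norm_num
    · refine small_case 4 1.6362943616 (by norm_num) (by norm_num) (by push_cast; norm_num; linarith [l5]) ?_
      have hb : bell 4 = 15 := by decide
      rw [hb]; norm_num
    · refine small_case 5 1.8862943616 (by norm_num) (by norm_num) (by push_cast; norm_num; linarith [l6]) ?_
      have hb : bell 5 = 52 := by decide
      rw [hb]; norm_num
    · refine small_case 6 2.1362943616 (by norm_num) (by norm_num) (by push_cast; norm_num; linarith [l7]) ?_
      have hb : bell 6 = 203 := by decide
      rw [hb]; norm_num
    · refine small_case 7 2.0794415424 (by norm_num) (by norm_num) (by push_cast; norm_num; linarith [l8]) ?_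
      have hb : bell 7 = 877 := by decide
      rw [hb]; norm_num
  · have hqR : (8:ℝ) ≤ (q:ℝ) := by exact_mod_cast h8
    obtain ⟨L, hLdef⟩ : ∃ x : ℝ, Real.log ((q:ℝ)+1) = x := ⟨_, rfl⟩
    rw [hLdef]
    have hL : 0 < L := hLdef ▸ Real.log_pos (by linarith)
    have ht : (0:ℝ) < 3/4*L := by positivity
    have hexpt : Real.exp (3/4*L) = ((q:ℝ)+1) ^ ((3:ℝ)/4) := by
      rw [Real.rpow_def_of_pos (by linarith), hLdef, mul_comm]
    have h1 : Real.exp (3/4*L) ≤ 2/3 * q := by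
      rw [hexpt]
      have h4 : (((q:ℝ)+1) ^ ((3:ℝ)/4))^(4:ℕ) ≤ (2/3*(q:ℝ))^(4:ℕ) := by
        have e1 : (((q:ℝ)+1) ^ ((3:ℝ)/4))^(4:ℕ) = ((q:ℝ)+1)^(3:ℕ) := by
          rw [← Real.rpow_natCast (((q:ℝ)+1) ^ ((3:ℝ)/4)) 4, ← Real.rpow_mul (by linarith),
              show ((3:ℝ)/4 * ((4:ℕ):ℝ) : ℝ) = ((3:ℕ):ℝ) by norm_num, Real.rpow_natCast]
        rw [e1]
        nlinarith [hqR, sq_nonneg ((q:ℝ) - 8), sq_nonneg ((q:ℝ)*(q:ℝ) - 8*(q:ℝ)),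
          mul_nonneg (mul_nonneg (by linarith : (0:ℝ) ≤ (q:ℝ)) (by linarith : (0:ℝ) ≤ (q:ℝ)))
            (by linarith : (0:ℝ) ≤ (q:ℝ) - 8)]
      exact le_of_pow_le_pow_left₀ (by norm_num) (by positivity) h4
    have hlog34 : Real.log (3/4 : ℝ) = - Real.log (4/3 : ℝ) := by
      rw [← Real.log_inv]; norm_num
    have h43 : Real.log (4/3 : ℝ) ≤ 1/3 := by
      have := Real.log_le_sub_one_of_pos (show (0:ℝ) < 4/3 by norm_num); linarith
    have hc : (2:ℝ)/3 ≤ Real.log (3/4 * Real.exp 1) := by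
      rw [Real.log_mul (by norm_num) (Real.exp_ne_zero 1), Real.log_exp, hlog34]
      linarith
    have h2 : Real.exp (Real.exp (3/4*L)) ≤ (3/4 * Real.exp 1)^q := by
      have hstep : Real.exp (3/4*L) ≤ (q:ℝ) * Real.log (3/4 * Real.exp 1) := by
        nlinarith [h1, hc, hqR]
      calc Real.exp (Real.exp (3/4*L)) ≤ Real.exp ((q:ℝ) * Real.log (3/4*Real.exp 1)) :=
            Real.exp_le_exp.mpr hstep
        _ = (3/4 * Real.exp 1)^q := by
            rw [Real.exp_nat_mul, Real.exp_log (by positivity)]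
    calc (bell q : ℝ) ≤ ((q:ℝ)/(Real.exp 1 * (3/4*L)))^q * Real.exp (Real.exp (3/4*L)) :=
          main_bound q (3/4*L) ht hq
      _ ≤ ((q:ℝ)/(Real.exp 1 * (3/4*L)))^q * (3/4 * Real.exp 1)^q := by
          gcongr
      _ = ((q:ℝ)/L)^q := by
          have he : Real.exp 1 ≠ 0 := Real.exp_ne_zero 1
          have hL' : L ≠ 0 := ne_of_gt hL
          have hfinal : (q:ℝ)/(Real.exp 1 * (3/4*L))*(3/4*Real.exp 1) = (q:ℝ)/L := by
            field_simp
          rw [← mul_pow, hfinal]
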